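/- arXiv:2211.14546 — 2 statements merged into one kernel-verified Lean document; each statement's English description precedes it below -/
import Mathlib

section
/- Let X be a δ-hyperbolic geodesic space, ℓ a bi-infinite geodesic, K > 0, and f : [a,b] → X a continuous rectifiable path with d(f(t),ℓ) ≥ K for all t. Set x = f(a), y = f(b), L = length(f([a,b])), and suppose L > 2δ. Then for every point z on a geodesic segment [x,y] there exists t ∈ [a,b] such that L ≥ (2^{d(z,f(t))/δ − 1} − 2)δ. -/
open Metric Set

/-- `g` parametrizes a geodesic segment from `x` to `y` (unit speed on `[0, dist x y]`). -/
def IsGeodParam {X : Type*} [MetricSpace X] (g : ℝ → X) (x y : X) : Prop :=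
  g 0 = x ∧ g (dist x y) = y ∧
    ∀ s ∈ Set.Icc (0:ℝ) (dist x y), ∀ t ∈ Set.Icc (0:ℝ) (dist x y),
      dist (g s) (g t) = |s - t|

/-- The geodesic segment as a subset of `X`. -/
def segSet {X : Type*} [MetricSpace X] (g : ℝ → X) (x y : X) : Set X :=
  g '' Set.Icc 0 (dist x y)

/-- `X` is δ-hyperbolic: every geodesic triangle is δ-thin. -/
def DeltaThin (X : Type*) [MetricSpace X] (δ : ℝ) : Prop :=
  ∀ (x y z : X) (gxy gyz gxz : ℝ → X),
    IsGeodParam gxy x y → IsGeodParam gyz y z → IsGeodParam gxz x z →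
    ∀ p ∈ segSet gxy x y, ∃ q ∈ segSet gyz y z ∪ segSet gxz x z, dist p q ≤ δ

/-- `ℓ` is a bi-infinite geodesic (an isometric embedding of `ℝ`). -/
def IsGeodLine {X : Type*} [MetricSpace X] (ℓ : ℝ → X) : Prop :=
  ∀ s t : ℝ, dist (ℓ s) (ℓ t) = |s - t|

noncomputable def chunkLen {X : Type*} [MetricSpace X] (v : ℕ → X) (k : ℕ) : ℝ :=
  ∑ i ∈ Finset.range k, dist (v i) (v (i+1))

lemma chunkLen_nonneg {X : Type*} [MetricSpace X] (v : ℕ → X) (k : ℕ) : 0 ≤ chunkLen v k :=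
  Finset.sum_nonneg fun _ _ => dist_nonneg

lemma chunkLen_succ {X : Type*} [MetricSpace X] (v : ℕ → X) (k : ℕ) :
    chunkLen v (k+1) = chunkLen v k + dist (v k) (v (k+1)) :=
  Finset.sum_range_succ _ _

lemma dist_le_chunkLen {X : Type*} [MetricSpace X] (v : ℕ → X) (k : ℕ) :
    dist (v 0) (v k) ≤ chunkLen v k := by
  induction k with
  | zero => simp [chunkLen]
  | succ k ih =>
    calc dist (v 0) (v (k+1)) ≤ dist (v 0) (v k) + dist (v k) (v (k+1)) := dist_triangle _ _ _
    _ ≤ chunkLen v k + dist (v k) (v (k+1)) := by linarith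
    _ = chunkLen v (k+1) := (chunkLen_succ v k).symm

lemma IsGeodParam.dist_left {X : Type*} [MetricSpace X] {g : ℝ → X} {p q : X}
    (h : IsGeodParam g p q) {s : ℝ} (hs : s ∈ Set.Icc 0 (dist p q)) : dist (g s) p = s := by
  have h0 : (0:ℝ) ∈ Set.Icc 0 (dist p q) := ⟨le_refl 0, dist_nonneg⟩
  have hd := h.2.2 s hs 0 h0
  rw [h.1] at hd
  rw [hd, sub_zero, abs_of_nonneg hs.1]

lemma IsGeodParam.dist_right {X : Type*} [MetricSpace X] {g : ℝ → X} {p q : X}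
    (h : IsGeodParam g p q) {s : ℝ} (hs : s ∈ Set.Icc 0 (dist p q)) :
    dist (g s) q = dist p q - s := by
  have hD : dist p q ∈ Set.Icc (0:ℝ) (dist p q) := ⟨dist_nonneg, le_refl _⟩
  have hd := h.2.2 s hs _ hD
  rw [h.2.1] at hd
  rw [hd, abs_of_nonpos (by linarith [hs.2]), neg_sub]

lemma IsGeodParam.reverse {X : Type*} [MetricSpace X] {g : ℝ → X} {p q : X}
    (h : IsGeodParam g p q) :
    ∃ g' : ℝ → X, IsGeodParam g' q p ∧ segSet g' q p = segSet g p q := by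
  have hd : dist q p = dist p q := dist_comm q p
  refine ⟨fun s => g (dist p q - s), ⟨by simpa using h.2.1, by simp [hd, h.1], ?_⟩, ?_⟩
  · intro s hs t ht
    rw [hd] at hs ht
    rw [h.2.2 _ ⟨by linarith [hs.2], by linarith [hs.1]⟩ _ ⟨by linarith [ht.2], by linarith [ht.1]⟩]
    rw [abs_sub_comm]
    congr 1
    ring
  · show (fun s => g (dist p q - s)) '' Set.Icc 0 (dist q p) = g '' Set.Icc 0 (dist p q)
    rw [hd, ← Set.image_image (f := fun s => dist p q - s) (g := g), Set.image_const_sub_Icc]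
    norm_num

lemma chunk_approx {X : Type*} [MetricSpace X] {δ ε : ℝ} (hδ : 0 < δ) (hε : 0 ≤ ε)
    (hyp : DeltaThin X δ) (hgeo : ∀ p q : X, ∃ g : ℝ → X, IsGeodParam g p q)
    {a b : ℝ} (f : ℝ → X) :
    ∀ N : ℕ, ∀ C : ℝ, ∀ k : ℕ, 1 ≤ k → ∀ v : ℕ → X,
      (∀ i < k, dist (v i) (v (i+1)) ≤ ε) →
      (∀ i ≤ k, ∃ t ∈ Set.Icc a b, dist (v i) (f t) ≤ C) →
      ∀ g' : ℝ → X, IsGeodParam g' (v 0) (v k) → ∀ z ∈ segSet g' (v 0) (v k),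
      ∃ t ∈ Set.Icc a b, dist z (f t) ≤ N * δ + C + N * ε + chunkLen v k / 2 ^ (N + 1) := by
  intro N
  induction N with
  | zero =>
    intro C k hk v hedge hvert g' hg' z hz
    obtain ⟨s, hs, rfl⟩ := hz
    have hD : dist (v 0) (v k) ≤ chunkLen v k := dist_le_chunkLen v k
    rcases le_or_gt s (dist (v 0) (v k) / 2) with h | h
    · obtain ⟨t, ht, hvt⟩ := hvert 0 (Nat.zero_le _)
      refine ⟨t, ht, ?_⟩
      have h1 : dist (g' s) (v 0) = s := hg'.dist_left hs
      have h2 : dist (g' s) (f t) ≤ dist (g' s) (v 0) + dist (v 0) (f t) := dist_triangle _ _ _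
      push_cast
      rw [h1] at h2
      have : chunkLen v k / 2 ^ (0+1) = chunkLen v k / 2 := by norm_num
      rw [this]
      linarith
    · obtain ⟨t, ht, hvt⟩ := hvert k (le_refl _)
      refine ⟨t, ht, ?_⟩
      have h1 : dist (g' s) (v k) = dist (v 0) (v k) - s := hg'.dist_right hs
      have h2 : dist (g' s) (f t) ≤ dist (g' s) (v k) + dist (v k) (f t) := dist_triangle _ _ _
      push_cast
      rw [h1] at h2
      have : chunkLen v k / 2 ^ (0+1) = chunkLen v k / 2 := by norm_num
      rw [this]
      linarith
  | succ N ih =>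
    intro C k hk v hedge hvert g' hg' z hz
    classical
    set ℒ := chunkLen v k with hLdef
    have hℒ0 : 0 ≤ ℒ := chunkLen_nonneg v k
    have hex : ∃ j, ℒ / 2 ≤ chunkLen v (j + 1) := by
      refine ⟨k - 1, ?_⟩
      have hk1 : k - 1 + 1 = k := Nat.succ_pred_eq_of_pos hk
      rw [hk1]
      linarith
    set j := Nat.find hex with hjdef
    have hj1 : ℒ / 2 ≤ chunkLen v (j + 1) := Nat.find_spec hex
    have hjk : j < k := by
      have h1 : j ≤ k - 1 := Nat.find_min' hex (by
        have hk1 : k - 1 + 1 = k := Nat.succ_pred_eq_of_pos hk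
        rw [hk1]; linarith)
      omega
    have hSj : chunkLen v j ≤ ℒ / 2 := by
      rcases Nat.eq_zero_or_pos j with h0 | h0
      · rw [h0]
        simpa [chunkLen] using by linarith
      · have hmin : ¬ (ℒ / 2 ≤ chunkLen v ((j - 1) + 1)) := Nat.find_min hex (by omega)
        have hj9 : j - 1 + 1 = j := by omega
        rw [hj9] at hmin
        linarith
    set dj := dist (v j) (v (j + 1)) with hdjdef
    have hSj1 : chunkLen v (j+1) = chunkLen v j + dj := chunkLen_succ v j
    set x := ℒ / 2 - chunkLen v j with hxdef
    have hx0 : 0 ≤ x := by simp only [hxdef]; linarith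
    have hxd : x ≤ dj := by rw [hSj1] at hj1; simp only [hxdef]; linarith
    obtain ⟨gj, hgj⟩ := hgeo (v j) (v (j+1))
    have hxmem : x ∈ Set.Icc (0:ℝ) (dist (v j) (v (j+1))) := ⟨hx0, by rw [← hdjdef]; exact hxd⟩
    set m := gj x with hmdef
    have hjm : dist (v j) m = x := by
      rw [dist_comm]; exact hgj.dist_left hxmem
    have hmj1 : dist m (v (j+1)) = dj - x := hgj.dist_right hxmem
    obtain ⟨gkm, hgkm⟩ := hgeo (v k) m
    obtain ⟨g0m, hg0m⟩ := hgeo (v 0) m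
    obtain ⟨q, hq, hzq⟩ := hyp (v 0) (v k) m g' gkm g0m hg' hgkm hg0m z hz
    have hdjε : dj ≤ ε := hedge j hjk
    have harith : ∀ w : X, dist q w ≤ N * δ + (C + ε) + N * ε + (ℒ/2) / 2 ^ (N + 1) →
        dist z w ≤ (N+1 : ℕ) * δ + C + (N+1 : ℕ) * ε + ℒ / 2 ^ (N + 1 + 1) := by
      intro w hqt
      have h3 : dist z w ≤ dist z q + dist q w := dist_triangle _ _ _
      have h4 : (ℒ/2) / 2 ^ (N + 1) = ℒ / 2 ^ (N + 1 + 1) := by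
        rw [pow_succ]; ring
      rw [h4] at hqt
      push_cast
      linarith
    rcases hq with hq | hq
    · -- q on segment [v k, m] : recurse on right chunk
      obtain ⟨grev, hgrev, hseg⟩ := hgkm.reverse
      set v' : ℕ → X := fun i => if i = 0 then m else v (j + i) with hv'def
      have hk' : 1 ≤ k - j := by omega
      have e0 : v' 0 = m := by simp [hv'def]
      have ek : v' (k - j) = v k := by
        have h1 : k - j ≠ 0 := by omega
        simp only [hv'def, if_neg h1]
        congr 1
        omega
      have hedge' : ∀ i < k - j, dist (v' i) (v' (i+1)) ≤ ε := by
        intro i hi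
        rcases Nat.eq_zero_or_pos i with h0 | h0
        · subst h0
          simp only [hv'def, if_pos rfl, if_neg (Nat.one_ne_zero)]
          rw [hmj1]
          linarith
        · have h1 : i ≠ 0 := h0.ne'
          simp only [hv'def, if_neg h1, if_neg (Nat.succ_ne_zero i)]
          have : j + (i+1) = (j+i) + 1 := by omega
          rw [this]
          exact hedge (j + i) (by omega)
      have hvert' : ∀ i ≤ k - j, ∃ t ∈ Set.Icc a b, dist (v' i) (f t) ≤ C + ε := by
        intro i hi
        rcases Nat.eq_zero_or_pos i with h0 | h0
        · subst h0
          obtain ⟨t, ht, hvt⟩ := hvert j hjk.le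
          refine ⟨t, ht, ?_⟩
          rw [e0]
          calc dist m (f t) ≤ dist m (v j) + dist (v j) (f t) := dist_triangle _ _ _
          _ ≤ x + C := by rw [dist_comm] at hjm; rw [hjm]; linarith
          _ ≤ C + ε := by linarith
        · obtain ⟨t, ht, hvt⟩ := hvert (j + i) (by omega)
          refine ⟨t, ht, ?_⟩
          simp only [hv'def, if_neg h0.ne']
          linarith
      have hlen : chunkLen v' (k - j) = ℒ / 2 := by
        have hKpos : 0 < k - j := by omega
        have h1 : chunkLen v' (k - j)
            = dist (v' 0) (v' 1) + ∑ i ∈ Finset.Ico 1 (k - j), dist (v' i) (v' (i+1)) := by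
          unfold chunkLen
          rw [Finset.range_eq_Ico, Finset.sum_eq_sum_Ico_succ_bot hKpos]
        have h2 : ∑ i ∈ Finset.Ico 1 (k - j), dist (v' i) (v' (i+1))
            = ∑ i ∈ Finset.Ico (j+1) k, dist (v i) (v (i+1)) := by
          rw [Finset.sum_Ico_eq_sum_range, Finset.sum_Ico_eq_sum_range]
          have hcard : k - j - 1 = k - (j+1) := by omega
          rw [hcard]
          refine Finset.sum_congr rfl ?_
          intro i hi
          simp only [hv'def, if_neg (by omega : ¬ (1 + i = 0)),
            if_neg (by omega : ¬ (1 + i + 1 = 0))]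
          have ha : j + (1 + i) = j + 1 + i := by omega
          have hb : j + (1 + i + 1) = j + 1 + i + 1 := by omega
          rw [ha, hb]
        have h3 : chunkLen v (j+1) + ∑ i ∈ Finset.Ico (j+1) k, dist (v i) (v (i+1)) = ℒ := by
          rw [hLdef]
          unfold chunkLen
          simp only [Finset.range_eq_Ico]
          exact Finset.sum_Ico_consecutive _ (by omega) (by omega)
        have h5 : v' 1 = v (j+1) := by simp [hv'def]
        rw [h1, e0, h5, hmj1, h2]
        linarith
      have hgrev' : IsGeodParam grev (v' 0) (v' (k - j)) := by rw [e0, ek]; exact hgrev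
      have hqmem : q ∈ segSet grev (v' 0) (v' (k - j)) := by rw [e0, ek, hseg]; exact hq
      obtain ⟨t, ht, hqt⟩ := ih (C + ε) (k - j) hk' v' hedge' hvert' grev hgrev' q hqmem
      rw [hlen] at hqt
      exact ⟨t, ht, harith (f t) hqt⟩
    · -- q on segment [v 0, m] : recurse on left chunk
      set v' : ℕ → X := fun i => if i ≤ j then v i else m with hv'def
      have e0 : v' 0 = v 0 := by simp [hv'def]
      have ek : v' (j + 1) = m := by simp [hv'def]
      have hedge' : ∀ i < j + 1, dist (v' i) (v' (i+1)) ≤ ε := by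
        intro i hi
        rcases Nat.lt_or_ge i j with h0 | h0
        · simp only [hv'def, if_pos h0.le, if_pos (by omega : i + 1 ≤ j)]
          exact hedge i (by omega)
        · have h1 : i = j := by omega
          rw [h1]
          simp only [hv'def]
          rw [if_pos (le_refl j), if_neg (by omega : ¬ j + 1 ≤ j)]
          rw [hjm]
          linarith
      have hvert' : ∀ i ≤ j + 1, ∃ t ∈ Set.Icc a b, dist (v' i) (f t) ≤ C + ε := by
        intro i hi
        rcases Nat.lt_or_ge i (j+1) with h0 | h0
        · obtain ⟨t, ht, hvt⟩ := hvert i (by omega)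
          refine ⟨t, ht, ?_⟩
          simp only [hv'def, if_pos (by omega : i ≤ j)]
          linarith
        · have h1 : i = j + 1 := by omega
          subst h1
          obtain ⟨t, ht, hvt⟩ := hvert j hjk.le
          refine ⟨t, ht, ?_⟩
          rw [ek]
          calc dist m (f t) ≤ dist m (v j) + dist (v j) (f t) := dist_triangle _ _ _
          _ ≤ x + C := by rw [dist_comm] at hjm; rw [hjm]; linarith
          _ ≤ C + ε := by linarith
      have hlen : chunkLen v' (j + 1) = ℒ / 2 := by
        have h1 : chunkLen v' (j+1) = chunkLen v' j + dist (v' j) (v' (j+1)) := chunkLen_succ v' j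
        have h2 : chunkLen v' j = chunkLen v j := by
          unfold chunkLen
          refine Finset.sum_congr rfl ?_
          intro i hi
          rw [Finset.mem_range] at hi
          simp only [hv'def, if_pos (by omega : i ≤ j), if_pos (by omega : i + 1 ≤ j)]
        have h3 : v' j = v j := by simp [hv'def]
        rw [h1, h2, h3, ek, hjm]
        linarith
      have hg0m' : IsGeodParam g0m (v' 0) (v' (j + 1)) := by rw [e0, ek]; exact hg0m
      have hqmem : q ∈ segSet g0m (v' 0) (v' (j + 1)) := by rw [e0, ek]; exact hq
      obtain ⟨t, ht, hqt⟩ := ih (C + ε) (j + 1) (by omega) v' hedge' hvert' g0m hg0m' q hqmem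
      rw [hlen] at hqt
      exact ⟨t, ht, harith (f t) hqt⟩

/-- Let `f : [a,b] → X` be a continuous rectifiable path staying at distance `≥ K` from a
bi-infinite geodesic `ℓ`, with length `L > 2δ`. Then for every `z` on a geodesic segment
`[f a, f b]` there is `t ∈ [a,b]` with `L ≥ (2^{d(z, f t)/δ − 1} − 2)·δ`. -/
theorem stmt_6 {X : Type*} [MetricSpace X] [ProperSpace X] (δ : ℝ) (hδ : 0 < δ)
    (hyp : DeltaThin X δ)
    (hgeo : ∀ p q : X, ∃ g : ℝ → X, IsGeodParam g p q)
    (ℓ : ℝ → X) (hℓ : IsGeodLine ℓ) (K : ℝ) (hK : 0 < K)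
    (a b : ℝ) (hab : a ≤ b) (f : ℝ → X) (hf : ContinuousOn f (Set.Icc a b))
    (hrect : eVariationOn f (Set.Icc a b) ≠ ⊤)
    (hfar : ∀ t ∈ Set.Icc a b, K ≤ Metric.infDist (f t) (Set.range ℓ))
    (g : ℝ → X) (hg : IsGeodParam g (f a) (f b))
    (hL : 2 * δ < (eVariationOn f (Set.Icc a b)).toReal) :
    ∀ z ∈ segSet g (f a) (f b), ∃ t ∈ Set.Icc a b,
      ((2 : ℝ) ^ (dist z (f t) / δ - 1) - 2) * δ ≤ (eVariationOn f (Set.Icc a b)).toReal := by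
  intro z hz
  classical
  set L := (eVariationOn f (Set.Icc a b)).toReal with hLdef
  have hL0 : 0 < L := lt_trans (by positivity) hL
  set u := L / δ with hudef
  have hu2 : 2 < u := by rw [hudef, lt_div_iff₀ hδ]; linarith
  have hexN : ∃ N : ℕ, u ≤ (2:ℝ) ^ (N + 1) := by
    obtain ⟨n, hn⟩ := pow_unbounded_of_one_lt u (by norm_num : (1:ℝ) < 2)
    exact ⟨n, hn.le.trans (pow_le_pow_right₀ (by norm_num) (Nat.le_succ n))⟩
  set N := Nat.find hexN with hNdef
  have hNs : u ≤ (2:ℝ) ^ (N + 1) := Nat.find_spec hexN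
  have hNlt : (2:ℝ) ^ N < u := by
    rcases Nat.eq_zero_or_pos N with h0 | h0
    · rw [h0]; norm_num; linarith
    · have hmin := Nat.find_min hexN (show N - 1 < N by omega)
      have h9 : N - 1 + 1 = N := by omega
      rw [h9] at hmin
      linarith [not_le.mp hmin]
  set r := (u + 2) / 2 ^ N with hrdef
  have h2N0 : (0:ℝ) < 2 ^ N := by positivity
  have hr1 : 1 < r := by rw [hrdef, lt_div_iff₀ h2N0]; linarith
  have hlb0 : 0 < Real.logb 2 r := Real.logb_pos (by norm_num) hr1
  set ε := δ * Real.logb 2 r / (N + 1) with hεdef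
  have hε0 : 0 < ε := by
    apply div_pos (mul_pos hδ hlb0)
    positivity
  have hunif : UniformContinuousOn f (Set.Icc a b) :=
    isCompact_Icc.uniformContinuousOn_of_continuous hf
  obtain ⟨η, hη0, hη⟩ := Metric.uniformContinuousOn_iff.mp hunif ε hε0
  obtain ⟨n0, hn0⟩ := exists_nat_gt ((b - a) / η)
  set n := max n0 1 with hndef
  have hn1 : 1 ≤ n := le_max_right _ _
  have hnpos : (0:ℝ) < (n:ℝ) := by exact_mod_cast hn1
  have hba : b - a < n * η := by
    have h1 : (b - a) / η < (n:ℝ) := lt_of_lt_of_le hn0 (by exact_mod_cast le_max_left n0 1)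
    calc b - a = (b - a) / η * η := by field_simp
    _ < n * η := mul_lt_mul_of_pos_right h1 hη0
  set c := (b - a) / n with hcdef
  have hc0 : 0 ≤ c := div_nonneg (by linarith) hnpos.le
  have hcη : c < η := by rw [hcdef, div_lt_iff₀ hnpos]; linarith
  set pt : ℕ → ℝ := fun i => a + ((min i n : ℕ) : ℝ) * c with hptdef
  have hptmem : ∀ i, pt i ∈ Set.Icc a b := by
    intro i
    have hm0 : (0:ℝ) ≤ ((min i n : ℕ) : ℝ) := Nat.cast_nonneg _
    have hmn : ((min i n : ℕ) : ℝ) ≤ (n:ℝ) := by exact_mod_cast min_le_right i n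
    constructor
    · simp only [hptdef]
      nlinarith
    · simp only [hptdef]
      have h1 : ((min i n : ℕ) : ℝ) * c ≤ n * c := mul_le_mul_of_nonneg_right hmn hc0
      have h2 : (n:ℝ) * c = b - a := by rw [hcdef]; field_simp
      linarith
  have hptmono : Monotone pt := by
    intro i j hij
    simp only [hptdef]
    have : ((min i n : ℕ) : ℝ) ≤ ((min j n : ℕ) : ℝ) := by
      exact_mod_cast min_le_min hij (le_refl n)
    nlinarith
  have hpt0 : pt 0 = a := by simp [hptdef]
  have hptn : pt n = b := by
    simp only [hptdef, min_self]
    have h2 : (n:ℝ) * c = b - a := by rw [hcdef]; field_simp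
    linarith
  set v : ℕ → X := fun i => f (pt i) with hvdef
  have hedge : ∀ i < n, dist (v i) (v (i+1)) ≤ ε := by
    intro i hi
    apply le_of_lt
    apply hη _ (hptmem i) _ (hptmem (i+1))
    have h1 : min i n = i := min_eq_left hi.le
    have h2 : min (i+1) n = i + 1 := min_eq_left hi
    have h3 : pt (i+1) - pt i = c := by
      simp only [hptdef, h1, h2]
      push_cast
      ring
    rw [Real.dist_eq, abs_sub_comm, h3, abs_of_nonneg hc0]
    exact hcη
  have hvert : ∀ i ≤ n, ∃ t ∈ Set.Icc a b, dist (v i) (f t) ≤ 0 := fun i _ =>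
    ⟨pt i, hptmem i, le_of_eq (dist_self _)⟩
  have hchain : chunkLen v n ≤ L := by
    have hsum := eVariationOn.sum_le (f := f) (s := Set.Icc a b) (n := n) hptmono (fun i => hptmem i)
    have heq : chunkLen v n = (∑ i ∈ Finset.range n, edist (f (pt (i+1))) (f (pt i))).toReal := by
      rw [ENNReal.toReal_sum (fun i _ => edist_ne_top _ _)]
      refine Finset.sum_congr rfl ?_
      intro i _
      show dist (f (pt i)) (f (pt (i+1))) = _
      rw [dist_edist, edist_comm]
    rw [heq, hLdef]
    exact ENNReal.toReal_mono hrect hsum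
  have hv0 : v 0 = f a := by simp only [hvdef]; rw [hpt0]
  have hvn : v n = f b := by simp only [hvdef]; rw [hptn]
  have hg' : IsGeodParam g (v 0) (v n) := by rw [hv0, hvn]; exact hg
  have hz' : z ∈ segSet g (v 0) (v n) := by rw [hv0, hvn]; exact hz
  clear_value L u N r ε n c pt v
  obtain ⟨t, ht, hdz⟩ := chunk_approx hδ hε0.le hyp hgeo f N 0 n hn1 v hedge hvert g hg' z hz'
  refine ⟨t, ht, ?_⟩
  have h2N1 : (0:ℝ) < 2 ^ (N+1) := by positivity
  have hLu : L = u * δ := by rw [hudef]; field_simp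
  have hcdiv : chunkLen v n / 2 ^ (N+1) ≤ δ := by
    rw [div_le_iff₀ h2N1]
    nlinarith
  have hd : dist z (f t) ≤ N * δ + N * ε + δ := by
    have := hdz
    push_cast at this ⊢
    linarith
  have hNε : (N:ℝ) * ε ≤ δ * Real.logb 2 r := by
    have h1 : (N:ℝ) ≤ (N:ℝ) + 1 := by linarith
    have h2 : (0:ℝ) < (N:ℝ) + 1 := by positivity
    have h3 : 0 ≤ δ * Real.logb 2 r := mul_nonneg hδ.le hlb0.le
    rw [hεdef, mul_div_assoc', div_le_iff₀ h2]
    linarith [mul_le_mul_of_nonneg_left h1 h3]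
  have hexp : dist z (f t) / δ - 1 ≤ (N:ℝ) + Real.logb 2 r := by
    rw [sub_le_iff_le_add, div_le_iff₀ hδ]
    linarith
  have h2pow : (2:ℝ) ^ (dist z (f t)/δ - 1) ≤ u + 2 := by
    calc (2:ℝ) ^ (dist z (f t)/δ - 1) ≤ (2:ℝ) ^ ((N:ℝ) + Real.logb 2 r) :=
      (Real.rpow_le_rpow_left_iff (by norm_num)).mpr hexp
    _ = (2:ℝ) ^ (N:ℝ) * (2:ℝ) ^ Real.logb 2 r := Real.rpow_add (by norm_num) _ _
    _ = (2:ℝ) ^ (N:ℝ) * r :=  by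
      rw [Real.rpow_logb (by norm_num) (by norm_num) (by linarith : (0:ℝ) < r)]
    _ = u + 2 := by
      rw [Real.rpow_natCast, hrdef]
      field_simp
  have hfin : ((2:ℝ) ^ (dist z (f t)/δ - 1) - 2) * δ ≤ u * δ :=
    mul_le_mul_of_nonneg_right (by linarith) hδ.le
  rw [hLu]
  exact hfin
end

section
/- Let X be a δ-hyperbolic geodesic space, ℓ a bi-infinite geodesic, K > 0, C > 0, and f : [a,b] → X a continuous rectifiable path with d(f(t),ℓ) ≥ K for all t, d(f(a),ℓ) ≤ K + C and d(f(b),ℓ) ≤ K + C. Set d = d(f(a),f(b)), L = length(f([a,b])), and C' = max(C,δ). If d ≤ 2K + 6δ, then L ≥ (2^{d/(2δ) − C'/δ − 5} − 2)δ. -/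
open Metric Set

section Aux

variable {X : Type*} [MetricSpace X]

lemma IsGeodParam.symm {g : ℝ → X} {x y : X} (h : IsGeodParam g x y) :
    IsGeodParam (fun u => g (dist x y - u)) y x := by
  obtain ⟨h0, h1, h2⟩ := h
  have hd : dist y x = dist x y := dist_comm y x
  refine ⟨by simpa using h1, by simpa [hd] using h0, ?_⟩
  intro s hs t ht
  rw [hd] at hs ht
  rw [h2 _ ⟨by linarith [hs.2], by linarith [hs.1]⟩ _ ⟨by linarith [ht.2], by linarith [ht.1]⟩]
  rw [abs_sub_comm]
  ring_nf

lemma IsGeodParam.segSet_symm {g : ℝ → X} {x y : X} (h : IsGeodParam g x y) :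
    segSet (fun u => g (dist x y - u)) y x = segSet g x y := by
  ext p
  simp only [segSet, mem_image, dist_comm y x]
  constructor
  · rintro ⟨u, hu, rfl⟩
    exact ⟨dist x y - u, ⟨by linarith [hu.2], by linarith [hu.1]⟩, rfl⟩
  · rintro ⟨u, hu, rfl⟩
    exact ⟨dist x y - u, ⟨by linarith [hu.2], by linarith [hu.1]⟩, by simp⟩

lemma IsGeodLine.exists_param {ℓ : ℝ → X} (hℓ : IsGeodLine ℓ) (s t : ℝ) :
    ∃ g : ℝ → X, IsGeodParam g (ℓ s) (ℓ t) ∧ segSet g (ℓ s) (ℓ t) ⊆ range ℓ := by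
  rcases le_total s t with h | h
  · refine ⟨fun u => ℓ (s + u), ⟨by simp, ?_, ?_⟩, ?_⟩
    · rw [hℓ s t, abs_of_nonpos (by linarith)]; ring_nf
    · intro u _ v _
      rw [hℓ]; congr 1; ring
    · rintro p ⟨u, _, rfl⟩; exact ⟨s + u, rfl⟩
  · refine ⟨fun u => ℓ (s - u), ⟨by simp, ?_, ?_⟩, ?_⟩
    · rw [hℓ s t, abs_of_nonneg (by linarith)]; ring_nf
    · intro u _ v _
      rw [hℓ, abs_sub_comm]; congr 1; ring
    · rintro p ⟨u, _, rfl⟩; exact ⟨s - u, rfl⟩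

open ENNReal in
lemma evar_small_right {f : ℝ → X} {c t : ℝ} (hct : c < t)
    (hf : ContinuousWithinAt f (Icc c t) c)
    (hfin : eVariationOn f (Icc c t) ≠ ⊤) {εr : ℝ} (hεr : 0 < εr) :
    ∃ u, c < u ∧ u ≤ t ∧ eVariationOn f (Icc c u) ≤ ENNReal.ofReal εr := by
  set E : ℝ≥0∞ := ENNReal.ofReal (εr / 4) with hE
  have hEpos : 0 < E := by simp [hE, hεr]
  -- continuity: find u₀
  obtain ⟨d, hd, hball⟩ := Metric.continuousWithinAt_iff.mp hf (εr / 4) (by linarith)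
  set u₀ : ℝ := min t (c + d / 2) with hu₀
  have hcu₀ : c < u₀ := lt_min hct (by linarith)
  have hu₀t : u₀ ≤ t := min_le_left _ _
  have hclose : ∀ x ∈ Icc c u₀, edist (f x) (f c) ≤ E := by
    intro x hx
    have hx' : x ∈ Icc c t := ⟨hx.1, hx.2.trans hu₀t⟩
    have : dist x c < d := by
      rw [Real.dist_eq, abs_of_nonneg (by linarith [hx.1])]
      have := hx.2.trans (min_le_right t (c + d / 2))
      linarith
    have := le_of_lt (hball hx' this)
    rw [edist_dist]
    exact ENNReal.ofReal_le_ofReal this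
  set V₀ := eVariationOn f (Icc c u₀) with hV₀
  have hV₀fin : V₀ ≠ ⊤ :=
    fun h => hfin (top_le_iff.mp (h ▸ eVariationOn.mono f (Icc_subset_Icc le_rfl hu₀t)))
  by_cases htriv : V₀ ≤ ENNReal.ofReal εr
  · exact ⟨u₀, hcu₀, hu₀t, htriv⟩
  push_neg at htriv
  have hV₀pos : 0 < V₀ := lt_trans (by simp [hεr]) htriv
  -- extract a partition with sum close to V₀
  have hlt : V₀ - E < V₀ := ENNReal.sub_lt_self hV₀fin (ne_of_gt hV₀pos) (ne_of_gt hEpos)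
  rw [hV₀, eVariationOn, lt_iSup_iff] at hlt
  obtain ⟨⟨n, v, hv, hvs⟩, hsum⟩ := hlt
  set S := ∑ i ∈ Finset.range n, edist (f (v (i + 1))) (f (v i)) with hS
  have hsum' : V₀ - E < S := hsum
  clear hsum
  by_cases hall : ∀ i, i ≤ n → v i = c
  · -- all points equal c, sum is 0, contradiction
    have hS0 : S = 0 := by
      apply Finset.sum_eq_zero
      intro i hi
      rw [Finset.mem_range] at hi
      rw [hall i (le_of_lt hi), hall (i+1) hi, edist_self]
    rw [hS0] at hsum'
    exact absurd hsum' (by simp)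
  push_neg at hall
  have hex : ∃ i, i ≤ n ∧ v i ≠ c := hall
  classical
  set j := Nat.find hex with hj
  obtain ⟨hjn, hjne⟩ := Nat.find_spec hex
  have hmin : ∀ i, i < j → i ≤ n → v i = c := by
    intro i hij hin
    by_contra hne
    exact Nat.find_min hex hij ⟨hin, hne⟩
  set w := v j with hw
  have hcw : c < w := lt_of_le_of_ne (hvs j).1 (Ne.symm hjne)
  have hwu₀ : w ≤ u₀ := (hvs j).2
  -- split the sum
  have hsplit : S ≤ E + eVariationOn f (Icc w u₀) := by
    have hdecomp : S = (∑ i ∈ Finset.range j, edist (f (v (i + 1))) (f (v i)))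
        + ∑ i ∈ Finset.range (n - j), edist (f (v (j + i + 1))) (f (v (j + i))) := by
      rw [hS, ← Finset.sum_range_add_sum_Ico _ hjn, Finset.sum_Ico_eq_sum_range]
    rw [hdecomp]
    gcongr
    · -- first part ≤ E
      have : ∀ i ∈ Finset.range j, edist (f (v (i + 1))) (f (v i))
          ≤ if i + 1 = j then E else 0 := by
        intro i hi
        rw [Finset.mem_range] at hi
        rw [hmin i hi (le_trans (le_of_lt hi) hjn)]
        by_cases h1 : i + 1 = j
        · rw [if_pos h1, h1]
          exact hclose w ⟨le_of_lt hcw, hwu₀⟩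
        · rw [if_neg h1, hmin (i+1) (lt_of_le_of_ne hi h1) (le_trans (lt_of_le_of_ne hi h1).le hjn), edist_self]
      calc ∑ i ∈ Finset.range j, edist (f (v (i + 1))) (f (v i))
          ≤ ∑ i ∈ Finset.range j, if i + 1 = j then E else 0 := Finset.sum_le_sum this
        _ ≤ E := by
            by_cases hj0 : j = 0
            · simp [hj0]
            · rw [Finset.sum_eq_single (j - 1)]
              · rw [if_pos (by omega)]
              · intro i hi hne
                rw [Finset.mem_range] at hi
                rw [if_neg (by omega)]
              · intro h
                rw [Finset.mem_range] at h
                omega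
    · -- second part is a partition sum in Icc w u₀
      have hv' : Monotone (fun i => v (j + i)) := fun i i' h => hv (by omega)
      have hvs' : ∀ i, v (j + i) ∈ Icc w u₀ := fun i => ⟨hv (Nat.le_add_right j i), (hvs _).2⟩
      exact eVariationOn.sum_le (f := f) (n := n - j) hv' hvs'
  -- conclude
  have hVsplit : eVariationOn f (Icc c w) + eVariationOn f (Icc w u₀) = V₀ := by
    have := eVariationOn.Icc_add_Icc f (le_of_lt hcw) hwu₀ (s := Icc c u₀) ⟨le_of_lt hcw, hwu₀⟩
    simpa [Set.Icc_inter_Icc, sup_idem, inf_idem, sup_eq_right.mpr hcw.le,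
      inf_eq_right.mpr hwu₀] using this
  have hwfin : eVariationOn f (Icc w u₀) ≠ ⊤ := by
    intro h
    exact hV₀fin (by rw [← hVsplit, h, add_top])
  have hEV : E ≤ V₀ :=
    le_of_lt (lt_of_le_of_lt (ENNReal.ofReal_le_ofReal (by linarith)) htriv)
  have hlt2 : V₀ < S + E := (ENNReal.sub_lt_iff_lt_right (by simp [hE]) hEV).mp hsum'
  have : eVariationOn f (Icc c w) + eVariationOn f (Icc w u₀)
      < (eVariationOn f (Icc w u₀) + E) + E := by
    rw [hVsplit]
    exact lt_of_lt_of_le hlt2 (by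
      have := add_le_add_left hsplit E
      calc S + E ≤ (E + eVariationOn f (Icc w u₀)) + E := this
        _ = (eVariationOn f (Icc w u₀) + E) + E := by ring)
  have hfinal : eVariationOn f (Icc c w) ≤ E + E := by
    rw [add_comm (eVariationOn f (Icc c w)), add_assoc] at this
    rw [add_comm E E] at this
    exact le_of_lt ((ENNReal.add_lt_add_iff_left hwfin).mp this)
  refine ⟨w, hcw, le_trans hwu₀ hu₀t, le_trans hfinal ?_⟩
  rw [hE, ← ENNReal.ofReal_add (by linarith) (by linarith)]
  exact ENNReal.ofReal_le_ofReal (by linarith)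

lemma evar_add (f : ℝ → X) {p q r : ℝ} (hpq : p ≤ q) (hqr : q ≤ r) :
    eVariationOn f (Icc p q) + eVariationOn f (Icc q r) = eVariationOn f (Icc p r) := by
  have := eVariationOn.Icc_add_Icc f hpq hqr (s := Icc p r) ⟨hpq, hqr⟩
  simpa [Set.Icc_inter_Icc, sup_idem, inf_idem, sup_eq_right.mpr hpq,
    inf_eq_right.mpr hqr, inf_eq_left.mpr hqr, sup_eq_left.mpr hpq] using this

lemma evar_small_left {f : ℝ → X} {s c : ℝ} (hsc : s < c)
    (hf : ContinuousWithinAt f (Icc s c) c)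
    (hfin : eVariationOn f (Icc s c) ≠ ⊤) {εr : ℝ} (hεr : 0 < εr) :
    ∃ u, s ≤ u ∧ u < c ∧ eVariationOn f (Icc u c) ≤ ENNReal.ofReal εr := by
  set g : ℝ → X := f ∘ (fun x => -x) with hg
  have himg : (fun x : ℝ => -x) '' Icc (-c) (-s) = Icc s c := by
    rw [show Icc (-c) (-s) = -Icc s c by simp [Set.neg_Icc], Set.image_neg_eq_neg, neg_neg]
  have hanti : AntitoneOn (fun x : ℝ => -x) (Icc (-c) (-s)) :=
    fun x _ y _ h => by simpa using h
  have hcomp : eVariationOn g (Icc (-c) (-s)) = eVariationOn f (Icc s c) := by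
    rw [hg, eVariationOn.comp_eq_of_antitoneOn f _ hanti, himg]
  have hcg : ContinuousWithinAt g (Icc (-c) (-s)) (-c) := by
    apply ContinuousWithinAt.comp (by simpa using hf) (continuous_neg.continuousWithinAt)
    intro x hx
    simp only [mem_Icc] at hx ⊢
    constructor <;> linarith
  obtain ⟨u', hu'1, hu'2, hu'3⟩ := evar_small_right (by linarith : -c < -s) hcg
    (by rw [hcomp]; exact hfin) hεr
  refine ⟨-u', by linarith, by linarith, ?_⟩
  have himg2 : (fun x : ℝ => -x) '' Icc (-c) u' = Icc (-u') c := by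
    rw [show Icc (-c) u' = -Icc (-u') c by simp [Set.neg_Icc], Set.image_neg_eq_neg, neg_neg]
  have hanti2 : AntitoneOn (fun x : ℝ => -x) (Icc (-c) u') :=
    fun x _ y _ h => by simpa using h
  have := eVariationOn.comp_eq_of_antitoneOn f _ hanti2
  rw [himg2] at this
  rw [← this]
  exact hu'3

lemma evar_halve {f : ℝ → X} {s t : ℝ} (hst : s ≤ t) (hf : ContinuousOn f (Icc s t))
    (hfin : eVariationOn f (Icc s t) ≠ ⊤) :
    ∃ c ∈ Icc s t, eVariationOn f (Icc s c) ≤ eVariationOn f (Icc s t) / 2 ∧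
      eVariationOn f (Icc c t) ≤ eVariationOn f (Icc s t) / 2 := by
  set V := eVariationOn f (Icc s t) with hV
  set A := {c ∈ Icc s t | eVariationOn f (Icc s c) ≤ V / 2} with hA
  have hsA : s ∈ A := by
    refine ⟨⟨le_rfl, hst⟩, ?_⟩
    rw [Set.Icc_self]
    rw [eVariationOn.subsingleton f (Set.subsingleton_singleton)]
    exact zero_le
  have hAne : A.Nonempty := ⟨s, hsA⟩
  have hAbdd : BddAbove A := ⟨t, fun x hx => hx.1.2⟩
  set c₀ := sSup A with hc₀
  have hsc₀ : s ≤ c₀ := le_csSup hAbdd hsA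
  have hc₀t : c₀ ≤ t := csSup_le hAne (fun x hx => hx.1.2)
  have hmemIcc : c₀ ∈ Icc s t := ⟨hsc₀, hc₀t⟩
  have hVfin2 : V / 2 ≠ ⊤ := (ENNReal.div_lt_top hfin (by norm_num)).ne
  refine ⟨c₀, hmemIcc, ?_, ?_⟩
  · -- left half
    rcases eq_or_lt_of_le hsc₀ with heq | hlt
    · rw [← heq, Set.Icc_self, eVariationOn.subsingleton f (Set.subsingleton_singleton)]
      exact zero_le
    apply ENNReal.le_of_forall_pos_le_add
    intro ε hε _
    have hcont : ContinuousWithinAt f (Icc s c₀) c₀ :=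
      (hf.mono (Icc_subset_Icc le_rfl hc₀t)) c₀ ⟨hsc₀, le_rfl⟩
    have hfin' : eVariationOn f (Icc s c₀) ≠ ⊤ :=
      fun h => hfin (top_le_iff.mp (h ▸ eVariationOn.mono f (Icc_subset_Icc le_rfl hc₀t)))
    obtain ⟨u, hu1, hu2, hu3⟩ := evar_small_left hlt hcont hfin' (by exact_mod_cast hε : (0:ℝ) < (ε:ℝ))
    obtain ⟨a', ha'A, ha'gt⟩ := exists_lt_of_lt_csSup hAne hu2
    have ha'le : a' ≤ c₀ := le_csSup hAbdd ha'A
    calc eVariationOn f (Icc s c₀) = eVariationOn f (Icc s a') + eVariationOn f (Icc a' c₀) := by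
          rw [evar_add f (hu1.trans ha'gt.le) ha'le]
      _ ≤ V / 2 + eVariationOn f (Icc u c₀) := by
          gcongr
          · exact ha'A.2
          · exact eVariationOn.mono f (Icc_subset_Icc ha'gt.le le_rfl)
      _ ≤ V / 2 + ENNReal.ofReal ε := by gcongr
      _ = V / 2 + (ε : ENNReal) := by rw [ENNReal.ofReal_coe_nnreal]
  · -- right half
    rcases eq_or_lt_of_le hc₀t with heq | hlt
    · rw [heq, Set.Icc_self, eVariationOn.subsingleton f (Set.subsingleton_singleton)]
      exact zero_le
    apply ENNReal.le_of_forall_pos_le_add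
    intro ε hε _
    have hcont : ContinuousWithinAt f (Icc c₀ t) c₀ :=
      (hf.mono (Icc_subset_Icc hsc₀ le_rfl)) c₀ ⟨le_rfl, hc₀t⟩
    have hfin' : eVariationOn f (Icc c₀ t) ≠ ⊤ :=
      fun h => hfin (top_le_iff.mp (h ▸ eVariationOn.mono f (Icc_subset_Icc hsc₀ le_rfl)))
    obtain ⟨u, hu1, hu2, hu3⟩ := evar_small_right hlt hcont hfin' (by exact_mod_cast hε : (0:ℝ) < (ε:ℝ))
    have huA : u ∉ A := fun h => absurd (le_csSup hAbdd h) (not_le.mpr hu1)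
    have hu5 : V / 2 < eVariationOn f (Icc s u) := by
      by_contra hcon
      push_neg at hcon
      exact huA ⟨⟨hsc₀.trans hu1.le, hu2⟩, hcon⟩
    have hut : eVariationOn f (Icc u t) ≤ V / 2 := by
      by_contra hcon
      push_neg at hcon
      have : V < V := by
        calc V = V / 2 + V / 2 := (ENNReal.add_halves V).symm
          _ < eVariationOn f (Icc s u) + eVariationOn f (Icc u t) := ENNReal.add_lt_add hu5 hcon
          _ = V := evar_add f (hsc₀.trans hu1.le) hu2
      exact absurd this (lt_irrefl _)
    calc eVariationOn f (Icc c₀ t) = eVariationOn f (Icc c₀ u) + eVariationOn f (Icc u t) := by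
          rw [evar_add f hu1.le hu2]
      _ ≤ ENNReal.ofReal ε + V / 2 := by gcongr
      _ = V / 2 + (ε : ENNReal) := by rw [ENNReal.ofReal_coe_nnreal, add_comm]

lemma IsGeodParam.dist_left_s10 {g : ℝ → X} {x y : X} (h : IsGeodParam g x y)
    {u : ℝ} (hu : u ∈ Icc (0:ℝ) (dist x y)) : dist x (g u) = u := by
  obtain ⟨h0, _, h2⟩ := h
  have := h2 0 ⟨le_rfl, dist_nonneg⟩ u hu
  rw [h0] at this
  rw [this, abs_of_nonpos (by linarith [hu.1])]
  ring

lemma IsGeodParam.dist_right_s10 {g : ℝ → X} {x y : X} (h : IsGeodParam g x y)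
    {u : ℝ} (hu : u ∈ Icc (0:ℝ) (dist x y)) : dist (g u) y = dist x y - u := by
  obtain ⟨_, h1, h2⟩ := h
  have := h2 u hu (dist x y) ⟨dist_nonneg, le_rfl⟩
  rw [h1] at this
  rw [this, abs_of_nonpos (by linarith [hu.2])]
  ring

lemma dyadic {δ : ℝ} (hδ : 0 ≤ δ) (hyp : DeltaThin X δ)
    (hgeo : ∀ p q : X, ∃ g : ℝ → X, IsGeodParam g p q)
    {a b : ℝ} {f : ℝ → X} (hf : ContinuousOn f (Icc a b))
    (hrect : eVariationOn f (Icc a b) ≠ ⊤)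
    {g0 : ℝ → X} (hg0 : IsGeodParam g0 (f a) (f b)) {m : X}
    (hm : m ∈ segSet g0 (f a) (f b)) (hab : a ≤ b) :
    ∀ n : ℕ, ∃ s t : ℝ, s ∈ Icc a b ∧ t ∈ Icc a b ∧ s ≤ t ∧
      eVariationOn f (Icc s t) ≤ eVariationOn f (Icc a b) / 2 ^ n ∧
      ∃ g : ℝ → X, IsGeodParam g (f s) (f t) ∧
        ∃ w ∈ segSet g (f s) (f t), dist m w ≤ n * δ := by
  intro n
  induction n with
  | zero =>
      exact ⟨a, b, ⟨le_rfl, hab⟩, ⟨hab, le_rfl⟩, hab,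
        by simp, g0, hg0, m, hm, by simp⟩
  | succ n ih =>
      obtain ⟨s, t, hs, ht, hst, hV, g, hg, w, hw, hdw⟩ := ih
      have hsub : Icc s t ⊆ Icc a b := Icc_subset_Icc hs.1 ht.2
      have hfin : eVariationOn f (Icc s t) ≠ ⊤ :=
        fun h => hrect (top_le_iff.mp (h ▸ eVariationOn.mono f hsub))
      obtain ⟨c, hc, h1, h2⟩ := evar_halve hst (hf.mono hsub) hfin
      have hcab : c ∈ Icc a b := hsub hc
      have hhalf : eVariationOn f (Icc s t) / 2 ≤ eVariationOn f (Icc a b) / 2 ^ (n + 1) := by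
        have heq : eVariationOn f (Icc a b) / 2 ^ (n + 1)
            = eVariationOn f (Icc a b) / 2 ^ n / 2 := by
          rw [div_eq_mul_inv, div_eq_mul_inv, div_eq_mul_inv, pow_succ,
            ENNReal.mul_inv (by simp) (by simp), mul_assoc]
        rw [heq]
        exact ENNReal.div_le_div_right hV 2
      obtain ⟨gtc, hgtc⟩ := hgeo (f t) (f c)
      obtain ⟨gsc, hgsc⟩ := hgeo (f s) (f c)
      obtain ⟨q, hq, hdq⟩ := hyp (f s) (f t) (f c) g gtc gsc hg hgtc hgsc w hw
      have hdmq : dist m q ≤ (n + 1 : ℕ) * δ := by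
        push_cast
        calc dist m q ≤ dist m w + dist w q := dist_triangle _ _ _
          _ ≤ n * δ + δ := add_le_add hdw hdq
          _ = (n + 1) * δ := by ring
      rcases hq with hq | hq
      · -- q on geodesic from (f t) to (f c) : use interval [c, t]
        refine ⟨c, t, hcab, ht, hc.2, le_trans h2 hhalf, ?_⟩
        refine ⟨fun u => gtc (dist (f t) (f c) - u), hgtc.symm, q, ?_, hdmq⟩
        rw [hgtc.segSet_symm]
        exact hq
      · -- q on geodesic from (f s) to (f c) : use interval [s, c]
        exact ⟨s, c, hs, hcab, hc.1, le_trans h1 hhalf, gsc, hgsc, q, hq, hdmq⟩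

end Aux

/-- Let `f : [a,b] → X` be a continuous rectifiable path staying at distance `≥ K` from the
bi-infinite geodesic `ℓ`, whose endpoints are at distance `≤ K + C` from `ℓ`. If
`d = d(f a, f b) ≤ 2K + 6δ`, then, with `C' = max C δ`,
`L ≥ (2^{d/(2δ) − C'/δ − 5} − 2)·δ`. -/
theorem stmt_10 {X : Type*} [MetricSpace X] [ProperSpace X] (δ : ℝ) (hδ : 0 < δ)
    (hyp : DeltaThin X δ)
    (hgeo : ∀ p q : X, ∃ g : ℝ → X, IsGeodParam g p q)
    (ℓ : ℝ → X) (hℓ : IsGeodLine ℓ) (K C : ℝ) (hK : 0 < K) (hC : 0 < C)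
    (a b : ℝ) (hab : a ≤ b) (f : ℝ → X) (hf : ContinuousOn f (Set.Icc a b))
    (hrect : eVariationOn f (Set.Icc a b) ≠ ⊤)
    (hfar : ∀ t ∈ Set.Icc a b, K ≤ Metric.infDist (f t) (Set.range ℓ))
    (ha : Metric.infDist (f a) (Set.range ℓ) ≤ K + C)
    (hb : Metric.infDist (f b) (Set.range ℓ) ≤ K + C)
    (hd : dist (f a) (f b) ≤ 2 * K + 6 * δ) :
    ((2 : ℝ) ^ (dist (f a) (f b) / (2 * δ) - max C δ / δ - 5) - 2) * δ ≤
      (eVariationOn f (Set.Icc a b)).toReal := by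
  set T := eVariationOn f (Set.Icc a b) with hT
  set L := T.toReal with hL
  have hL0 : 0 ≤ L := ENNReal.toReal_nonneg
  set d := dist (f a) (f b) with hdd
  have hd0 : 0 ≤ d := dist_nonneg
  set C' := max C δ with hC'
  have hC'δ : δ ≤ C' := le_max_right _ _
  have hC'C : C ≤ C' := le_max_left _ _
  set A := d / (2 * δ) - C' / δ - 5 with hA
  by_cases htriv : (2 : ℝ) ^ A ≤ 2
  · have : ((2:ℝ) ^ A - 2) * δ ≤ 0 := mul_nonpos_of_nonpos_of_nonneg (by linarith) hδ.le
    linarith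
  push_neg at htriv
  have hA1 : 1 < A := by
    by_contra h
    push_neg at h
    have := Real.rpow_le_rpow_of_exponent_le (by norm_num : (1:ℝ) ≤ 2) h
    rw [Real.rpow_one] at this
    linarith
  -- midpoint of a geodesic from f a to f b
  obtain ⟨g0, hg0⟩ := hgeo (f a) (f b)
  have hd2 : d / 2 ∈ Icc (0:ℝ) d := ⟨by linarith, by linarith⟩
  set m := g0 (d / 2) with hm
  have hmseg : m ∈ segSet g0 (f a) (f b) := ⟨d / 2, hd2, rfl⟩
  have hma : dist (f a) m = d / 2 := hg0.dist_left_s10 hd2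
  have hmb : dist m (f b) = d / 2 := by rw [hm, hg0.dist_right_s10 hd2]; ring
  -- nearest points
  have hisom : Isometry ℓ := Isometry.of_dist_eq (fun s t => by rw [hℓ, Real.dist_eq])
  have hclosed : IsClosed (range ℓ) := hisom.isClosedEmbedding.isClosed_range
  have hne : (range ℓ).Nonempty := range_nonempty ℓ
  obtain ⟨pa, hpa, hpad⟩ := hclosed.exists_infDist_eq_dist hne (f a)
  obtain ⟨pb, hpb, hpbd⟩ := hclosed.exists_infDist_eq_dist hne (f b)
  have hxpa : dist (f a) pa ≤ K + C := by rw [← hpad]; exact ha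
  have hypb : dist (f b) pb ≤ K + C := by rw [← hpbd]; exact hb
  obtain ⟨ta, hta⟩ := id hpa
  obtain ⟨tb, htb⟩ := id hpb
  obtain ⟨gpba, hgpba, hgrange⟩ := hℓ.exists_param tb ta
  rw [hta] at hgpba hgrange
  rw [htb] at hgpba hgrange
  obtain ⟨gxpb, hgxpb⟩ := hgeo (f a) pb
  obtain ⟨gypb, hgypb⟩ := hgeo (f b) pb
  obtain ⟨gxpa, hgxpa⟩ := hgeo (f a) pa
  obtain ⟨q, hq, hdq⟩ := hyp (f a) (f b) pb g0 gypb gxpb hg0 hgypb hgxpb m hmseg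
  have hlow : infDist m (range ℓ) ≤ max (K - d/2 + C' + 4*δ) (2*δ) := by
    rcases hq with hq | hq
    · -- q on the geodesic from f b to pb
      obtain ⟨u, hu, rfl⟩ := hq
      have h1 : dist (f b) (gypb u) = u := hgypb.dist_left_s10 hu
      have h2 : dist (gypb u) pb = dist (f b) pb - u := hgypb.dist_right_s10 hu
      have h3 : d/2 ≤ δ + u := by
        calc d/2 = dist m (f b) := hmb.symm
          _ ≤ dist m (gypb u) + dist (gypb u) (f b) := dist_triangle _ _ _
          _ ≤ δ + u := by rw [dist_comm (gypb u) (f b), h1]; exact add_le_add_left hdq u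
      refine le_trans (le_trans (infDist_le_dist_of_mem hpb) ?_) (le_max_left _ _)
      calc dist m pb ≤ dist m (gypb u) + dist (gypb u) pb := dist_triangle _ _ _
        _ ≤ δ + (dist (f b) pb - u) := by rw [h2]; exact add_le_add_left hdq _
        _ ≤ K - d/2 + C' + 4*δ := by linarith
    · -- q on the geodesic from f a to pb
      obtain ⟨q', hq', hdr⟩ := hyp (f a) pb pa gxpb gpba gxpa hgxpb hgpba hgxpa q hq
      rcases hq' with hr | hr
      · -- q' lies on ℓ
        have hq'mem : q' ∈ range ℓ := hgrange hr
        refine le_trans (le_trans (infDist_le_dist_of_mem hq'mem) ?_) (le_max_right _ _)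
        calc dist m q' ≤ dist m q + dist q q' := dist_triangle _ _ _
          _ ≤ 2*δ := by linarith
      · -- q' on the geodesic from f a to pa
        obtain ⟨u, hu, rfl⟩ := hr
        have h1 : dist (f a) (gxpa u) = u := hgxpa.dist_left_s10 hu
        have h2 : dist (gxpa u) pa = dist (f a) pa - u := hgxpa.dist_right_s10 hu
        have h3 : d/2 ≤ u + 2*δ := by
          calc d/2 = dist (f a) m := hma.symm
            _ ≤ dist (f a) (gxpa u) + dist (gxpa u) q + dist q m := dist_triangle4 _ _ _ _
            _ ≤ u + 2*δ := by
                rw [h1, dist_comm (gxpa u) q, dist_comm q m]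
                linarith
        refine le_trans (le_trans (infDist_le_dist_of_mem hpa) ?_) (le_max_left _ _)
        calc dist m pa ≤ dist m q + dist q (gxpa u) + dist (gxpa u) pa := dist_triangle4 _ _ _ _
          _ ≤ δ + δ + (dist (f a) pa - u) := by rw [h2]; exact add_le_add (add_le_add hdq hdr) le_rfl
          _ ≤ K - d/2 + C' + 4*δ := by linarith
  -- lower bound on dist m (f t)
  have hmfar : ∀ t ∈ Icc a b, d/2 - C' - 4*δ ≤ dist m (f t) := by
    intro t htI
    have h1 : K ≤ infDist (f t) (range ℓ) := hfar t htI
    have h2 : infDist (f t) (range ℓ) ≤ infDist m (range ℓ) + dist (f t) m :=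
      infDist_le_infDist_add_dist
    have hK2 : d/2 - 3*δ ≤ K := by linarith
    rw [dist_comm m (f t)]
    rcases le_max_iff.mp hlow with h | h
    · linarith
    · linarith
  -- upper bounds from the dyadic subdivision
  have hupper : ∀ n : ℕ, ∃ t' ∈ Icc a b, dist m (f t') ≤ n * δ + L / 2^(n+1) := by
    intro n
    obtain ⟨s, t, hsI, htI, hst, hVn, g, hg, w, hw, hdw⟩ :=
      dyadic hδ.le hyp hgeo hf hrect hg0 hmseg hab n
    obtain ⟨u, hu, rfl⟩ := hw
    have hfinn : T / 2^n ≠ ⊤ := (ENNReal.div_lt_top hrect (by positivity)).ne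
    have hD : dist (f s) (f t) ≤ L / 2^n := by
      have h1 : edist (f s) (f t) ≤ eVariationOn f (Icc s t) :=
        eVariationOn.edist_le f ⟨le_rfl, hst⟩ ⟨hst, le_rfl⟩
      have h2 : edist (f s) (f t) ≤ T / 2^n := le_trans h1 hVn
      rw [dist_edist]
      calc (edist (f s) (f t)).toReal ≤ (T / 2^n).toReal :=
            ENNReal.toReal_mono hfinn h2
        _ = L / 2^n := by
            rw [ENNReal.toReal_div, hL]
            norm_num
    have hhalf : dist (f s) (f t) / 2 ≤ L / 2^(n+1) := by
      rw [pow_succ]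
      calc dist (f s) (f t) / 2 ≤ (L / 2^n) / 2 := by linarith
        _ = L / (2^n * 2) := by ring
    rcases le_total u (dist (f s) (f t) / 2) with hu2 | hu2
    · refine ⟨s, hsI, ?_⟩
      calc dist m (f s) ≤ dist m (g u) + dist (g u) (f s) := dist_triangle _ _ _
        _ ≤ n * δ + L / 2^(n+1) := by
            rw [dist_comm (g u) (f s), hg.dist_left_s10 hu]
            exact add_le_add hdw (le_trans hu2 hhalf)
    · refine ⟨t, htI, ?_⟩
      calc dist m (f t) ≤ dist m (g u) + dist (g u) (f t) := dist_triangle _ _ _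
        _ ≤ n * δ + L / 2^(n+1) := by
            rw [hg.dist_right_s10 hu]
            refine add_le_add hdw (le_trans ?_ hhalf)
            linarith [hu.2]
  have hcomb : ∀ n : ℕ, d/2 - C' - 4*δ ≤ n * δ + L / 2^(n+1) := by
    intro n
    obtain ⟨t', ht', h⟩ := hupper n
    exact le_trans (hmfar t' ht') h
  -- final computation
  by_contra hcon
  push_neg at hcon
  have hceilA : (1:ℤ) < ⌈A⌉ := by
    have h1 : (1:ℝ) < (⌈A⌉:ℝ) := lt_of_lt_of_le hA1 (Int.le_ceil A)
    exact_mod_cast h1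
  set n : ℕ := (⌈A⌉ - 1).toNat with hn
  have hnz : (n:ℤ) = ⌈A⌉ - 1 := by
    rw [hn]
    exact Int.toNat_of_nonneg (by omega)
  have hncast : (n:ℝ) = (⌈A⌉:ℝ) - 1 := by exact_mod_cast hnz
  have hn1 : (n : ℝ) < A := by
    rw [hncast]
    linarith [Int.ceil_lt_add_one A]
  have hn2 : A ≤ (n : ℝ) + 1 := by
    rw [hncast]
    linarith [Int.le_ceil A]
  have hppos : (0:ℝ) < 2^(n+1) := by positivity
  have hAδ : A * δ = d/2 - C' - 5*δ := by
    rw [hA]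
    field_simp
  have e1 : (A + 1) * δ ≤ n * δ + L / 2^(n+1) := by
    have := hcomb n
    linarith
  have e2 : L / 2^(n+1) < ((2:ℝ)^A - 2) * δ / 2^(n+1) := by
    gcongr
  have h3 : (2:ℝ)^A ≤ 2^(n+1) := by
    calc (2:ℝ)^A ≤ 2^((n:ℝ)+1) := (Real.rpow_le_rpow_left_iff one_lt_two).mpr hn2
      _ = 2^(n+1) := by
          rw [show ((n:ℝ)+1) = ((n+1 : ℕ) : ℝ) by push_cast; ring, Real.rpow_natCast]
  have e3 : ((2:ℝ)^A - 2) * δ / 2^(n+1) ≤ (1 - 2/2^(n+1)) * δ := by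
    have h5 : (2:ℝ)^A / 2^(n+1) ≤ 1 := (div_le_one hppos).mpr h3
    have h4 : ((2:ℝ)^A - 2) / 2^(n+1) ≤ 1 - 2/2^(n+1) := by
      have hsplit : ((2:ℝ)^A - 2) / 2^(n+1) = 2^A/2^(n+1) - 2/2^(n+1) := by ring
      linarith
    calc ((2:ℝ)^A - 2) * δ / 2^(n+1) = (((2:ℝ)^A - 2) / 2^(n+1)) * δ := by ring
      _ ≤ (1 - 2/2^(n+1)) * δ := mul_le_mul_of_nonneg_right h4 hδ.le
  have e4 : (0:ℝ) < 2 / 2^(n+1) * δ := by positivity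
  have e5 : ((n:ℝ) + 1) * δ < (A + 1) * δ :=
    mul_lt_mul_of_pos_right (by linarith) hδ
  have final : (A+1)*δ < (A+1)*δ :=
    calc (A+1)*δ ≤ n*δ + L/2^(n+1) := e1
      _ < n*δ + ((2:ℝ)^A - 2)*δ/2^(n+1) := by linarith [e2]
      _ ≤ n*δ + (1 - 2/2^(n+1))*δ := by linarith [e3]
      _ = ((n:ℝ)+1)*δ - (2/2^(n+1))*δ := by ring
      _ < ((n:ℝ)+1)*δ := by linarith [e4]
      _ < (A+1)*δ := e5
  exact absurd final (lt_irrefl _)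
end
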